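/- In the polynomial ring R = ℚ[x11, x22, x21, x12, x23, x13, x14, x24], the ideal Q2 generated by x13, x23, and x11*x22 − x21*x12 is a prime ideal. -/

import Mathlib

open MvPolynomial

noncomputable section

abbrev R : Type := MvPolynomial (Fin 8) ℚ

def x11 : R := X 0
def x22 : R := X 1
def x21 : R := X 2
def x12 : R := X 3
def x23 : R := X 4
def x13 : R := X 5
def x14 : R := X 6
def x24 : R := X 7

def I : Ideal R :=
  Ideal.span {x11 * x22 - x21 * x12, x12 * x23 - x22 * x13, x13 * x24 - x23 * x14}

def Q1 : Ideal R :=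
  Ideal.span {x23 * x14 - x13 * x24, x21 * x14 - x11 * x24, x22 * x14 - x12 * x24,
    x12 * x23 - x22 * x13, x11 * x23 - x21 * x13, x11 * x22 - x21 * x12}

def Q2 : Ideal R := Ideal.span {x13, x23, x11 * x22 - x21 * x12}

def Q3 : Ideal R := Ideal.span {x12, x22, x23 * x14 - x13 * x24}

/- Auxiliary development for `Q2_isPrime`. -/

abbrev A' : Type := MvPolynomial (Fin 5) ℚ
abbrev S' : Type := MvPolynomial (Fin 6) ℚ

lemma primeX0 (n : ℕ) : Prime (X 0 : MvPolynomial (Fin (n+1)) ℚ) := by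
  rw [← MulEquiv.prime_iff (finSuccEquiv ℚ n).toRingEquiv.toMulEquiv]
  have : (finSuccEquiv ℚ n).toRingEquiv.toMulEquiv (X 0) = Polynomial.X := by
    simp [finSuccEquiv_X_zero]
  rw [this]
  exact Polynomial.prime_X

lemma not_X0_dvd {j : Fin 5} (hj : j ≠ 0) : ¬ (X 0 : A') ∣ X j := by
  intro hdvd
  have h := map_dvd (aeval (fun k : Fin 5 => if k = 0 then (0:ℚ) else 1)) hdvd
  simp [hj] at h

lemma prime_lin :
    Prime (Polynomial.C (X 0) * Polynomial.X + Polynomial.C (-(X 1 * X 2)) :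
      Polynomial A') := by
  letI : NormalizationMonoid A' := UniqueFactorizationMonoid.normalizationMonoid.toNormalizationMonoid
  letI : NormalizedGCDMonoid A' := UniqueFactorizationMonoid.toNormalizedGCDMonoid A'
  rw [← UniqueFactorizationMonoid.irreducible_iff_prime]
  have hprim : Polynomial.IsPrimitive
      (Polynomial.C (X 0) * Polynomial.X + Polynomial.C (-(X 1 * X 2)) : Polynomial A') := by
    intro r hr
    have h1 : r ∣ (X 0 : A') := by
      have := (Polynomial.C_dvd_iff_dvd_coeff r _).mp hr 1
      simpa using this
    have h0 : r ∣ (X 1 * X 2 : A') := by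
      have := (Polynomial.C_dvd_iff_dvd_coeff r _).mp hr 0
      simpa [dvd_neg] using this
    obtain ⟨s, hs⟩ := h1
    rcases (primeX0 4).irreducible.isUnit_or_isUnit hs with h | h
    · exact h
    · exfalso
      have hX0r : (X 0 : A') ∣ r := by
        obtain ⟨u, rfl⟩ := h
        exact ⟨(u⁻¹ : A'ˣ), by rw [hs, mul_assoc, Units.mul_inv, mul_one]⟩
      have : (X 0 : A') ∣ X 1 * X 2 := hX0r.trans h0
      rcases (primeX0 4).2.2 _ _ this with h' | h'
      · exact not_X0_dvd (by decide) h'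
      · exact not_X0_dvd (by decide) h'
  rw [hprim.irreducible_iff_irreducible_map_fraction_map (K := FractionRing A')]
  have hinj := IsFractionRing.injective A' (FractionRing A')
  have ha : algebraMap A' (FractionRing A') (X 0) ≠ 0 := by
    rw [map_ne_zero_iff _ hinj]
    exact MvPolynomial.X_ne_zero 0
  have hmap : (Polynomial.C (X 0) * Polynomial.X + Polynomial.C (-(X 1 * X 2)) :
      Polynomial A').map (algebraMap A' (FractionRing A')) =
      Polynomial.C (algebraMap A' (FractionRing A') (X 0)) * Polynomial.X +
        Polynomial.C (algebraMap A' (FractionRing A') (-(X 1 * X 2))) := by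
    simp
  rw [hmap]
  exact Polynomial.irreducible_of_degree_eq_one (Polynomial.degree_linear ha)

lemma prime_det : Prime (X 0 * X 1 - X 2 * X 3 : S') := by
  rw [← MulEquiv.prime_iff (finSuccEquiv ℚ 5).toRingEquiv.toMulEquiv]
  have h1 : (X 1 : S') = X ((0 : Fin 5).succ) := rfl
  have h2 : (X 2 : S') = X ((1 : Fin 5).succ) := rfl
  have h3 : (X 3 : S') = X ((2 : Fin 5).succ) := rfl
  have : (finSuccEquiv ℚ 5).toRingEquiv.toMulEquiv (X 0 * X 1 - X 2 * X 3 : S') =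
      Polynomial.C (X 0) * Polynomial.X + Polynomial.C (-(X 1 * X 2)) := by
    show (finSuccEquiv ℚ 5) (X 0 * X 1 - X 2 * X 3 : S') = _
    rw [map_sub, map_mul, map_mul, h1, h2, h3, finSuccEquiv_X_zero,
      finSuccEquiv_X_succ, finSuccEquiv_X_succ, finSuccEquiv_X_succ]
    rw [Polynomial.C_neg, Polynomial.C_mul]
    ring
  rw [this]
  exact prime_lin

def vmap : Fin 8 → S'
  | ⟨0, _⟩ => X 0
  | ⟨1, _⟩ => X 1
  | ⟨2, _⟩ => X 2
  | ⟨3, _⟩ => X 3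
  | ⟨4, _⟩ => 0
  | ⟨5, _⟩ => 0
  | ⟨6, _⟩ => X 4
  | ⟨7, _⟩ => X 5

def ψ : R →ₐ[ℚ] S' := aeval vmap

def gmap : Fin 6 → Fin 8
  | ⟨0, _⟩ => 0
  | ⟨1, _⟩ => 1
  | ⟨2, _⟩ => 2
  | ⟨3, _⟩ => 3
  | ⟨4, _⟩ => 6
  | ⟨5, _⟩ => 7

lemma vmap_gmap : vmap ∘ gmap = X := by
  funext i
  fin_cases i <;> rfl

lemma psi_rename (q : S') : ψ (rename gmap q) = q := by
  rw [ψ, aeval_rename, vmap_gmap, aeval_X_left_apply]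

lemma psi_surj : Function.Surjective ψ := fun q => ⟨rename gmap q, psi_rename q⟩

lemma hXi (i : Fin 8) : X i - rename gmap (ψ (X i)) ∈ Ideal.span ({x13, x23} : Set R) := by
  rw [ψ, aeval_X]
  fin_cases i <;> simp [vmap, gmap, x13, x23]
  all_goals exact Ideal.subset_span (by simp)

lemma sub_retract_mem (p : R) :
    p - rename gmap (ψ p) ∈ Ideal.span ({x13, x23} : Set R) := by
  induction p using MvPolynomial.induction_on with
  | C a => simp [ψ]
  | add p q hp hq =>
      have : p + q - rename gmap (ψ (p + q)) =
          (p - rename gmap (ψ p)) + (q - rename gmap (ψ q)) := by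
        rw [map_add, map_add]; ring
      rw [this]; exact Ideal.add_mem _ hp hq
  | mul_X p i hp =>
      have : p * X i - rename gmap (ψ (p * X i)) =
          (p - rename gmap (ψ p)) * X i +
            rename gmap (ψ p) * (X i - rename gmap (ψ (X i))) := by
        rw [map_mul, map_mul]; ring
      rw [this]
      exact Ideal.add_mem _ (Ideal.mul_mem_right _ _ hp)
        (Ideal.mul_mem_left _ _ (hXi i))

lemma ker_le : RingHom.ker (ψ : R →+* S') ≤ Ideal.span ({x13, x23} : Set R) := by
  intro p hp
  have h0 : ψ p = 0 := hp
  have := sub_retract_mem p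
  rwa [h0, map_zero, sub_zero] at this

theorem Q2_isPrime : Q2.IsPrime := by
  have hker : RingHom.ker (ψ : R →+* S') ≤ Q2 :=
    le_trans ker_le (Ideal.span_mono (by
      intro x hx
      simp only [Set.mem_insert_iff, Set.mem_singleton_iff] at hx ⊢
      rcases hx with rfl | rfl
      · exact Or.inl rfl
      · exact Or.inr (Or.inl rfl)))
  have hmap : Ideal.map (ψ : R →+* S') Q2 =
      Ideal.span {(X 0 * X 1 - X 2 * X 3 : S')} := by
    rw [Q2, Ideal.map_span]
    have himg : (ψ : R →+* S') '' {x13, x23, x11 * x22 - x21 * x12} =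
        {0, 0, X 0 * X 1 - X 2 * X 3} := by
      simp only [Set.image_insert_eq, Set.image_singleton]
      have e1 : ψ x13 = 0 := by rw [ψ, x13, aeval_X]; rfl
      have e2 : ψ x23 = 0 := by rw [ψ, x23, aeval_X]; rfl
      have e3 : ψ (x11 * x22 - x21 * x12) = X 0 * X 1 - X 2 * X 3 := by
        simp [ψ, x11, x22, x21, x12, vmap]
      rw [show ((ψ : R →+* S') : R → S') = ψ from rfl, e1, e2, e3]
    rw [himg]
    rw [show ({0, 0, X 0 * X 1 - X 2 * X 3} : Set S') = insert 0 {X 0 * X 1 - X 2 * X 3} by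
      simp]
    exact Submodule.span_insert_zero
  have hprime : (Ideal.span {(X 0 * X 1 - X 2 * X 3 : S')}).IsPrime :=
    (Ideal.span_singleton_prime prime_det.ne_zero).mpr prime_det
  have hsurj : Function.Surjective ((ψ : R →+* S') : R → S') := psi_surj
  have hQ2 : Q2 = Ideal.comap (ψ : R →+* S') (Ideal.map (ψ : R →+* S') Q2) := by
    rw [Ideal.comap_map_of_surjective (ψ : R →+* S') hsurj Q2]
    exact (sup_eq_left.mpr hker).symm
  rw [hQ2, hmap]
  exact hprime.comap _

end
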